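/- Let ℓ ∈ ℕ and let g^{(ℓ)} be defined by g^{(ℓ)}_n := √n · ∏_{j=1}^{ℓ−1}(n−j) for integers n ≥ 0 and g^{(ℓ)}_n := 0 for n < 0. Then (∂^ℓ g^{(ℓ)})_n > 0 for all integers n ≥ 0, and (∂^k g^{(ℓ)})_n > 0 for all integers n ≥ ℓ−k and all 0 ≤ k < ℓ. In particular g^{(ℓ)} satisfies assumption (A1). -/

import Mathlib

noncomputable section

open scoped ENNReal

namespace HRB

/-- discrete gradient `(∇u)_n = u_n - u_{n-1}` -/
def grad (u : ℤ → ℂ) : ℤ → ℂ := fun n => u n - u (n - 1)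

/-- discrete divergence (forward difference) `(∂u)_n = u_{n+1} - u_n` -/
def fdiff (u : ℤ → ℂ) : ℤ → ℂ := fun n => u (n + 1) - u n

/-- averaging operator `(Mu)_n = (u_n + u_{n+1})/2` -/
def avg (u : ℤ → ℂ) : ℤ → ℂ := fun n => (u n + u (n + 1)) / 2

/-- negative discrete Laplacian `((-Δ)u)_n = 2u_n - u_{n-1} - u_{n+1}` -/
def negLap (u : ℤ → ℂ) : ℤ → ℂ := fun n => 2 * u n - u (n - 1) - u (n + 1)

/-- `(-Δ)^{ℓ/2}`: equal to `(-Δ)^m` if `ℓ = 2m` and to `∇ ∘ (-Δ)^m` if `ℓ = 2m+1`. -/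
def halfPow (l : ℕ) (u : ℤ → ℂ) : ℤ → ℂ :=
  if l % 2 = 0 then negLap^[l / 2] u else grad (negLap^[l / 2] u)

def gradR (u : ℤ → ℝ) : ℤ → ℝ := fun n => u n - u (n - 1)

def fdiffR (u : ℤ → ℝ) : ℤ → ℝ := fun n => u (n + 1) - u n

def negLapR (u : ℤ → ℝ) : ℤ → ℝ := fun n => 2 * u n - u (n - 1) - u (n + 1)

/-- `u ∈ H^ℓ` -/
def memH (l : ℤ) (u : ℤ → ℂ) : Prop := ∀ n : ℤ, n < l → u n = 0

/-- `u ∈ 𝓗₀^ℓ`: compactly supported elements of `H^ℓ` -/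
def memH0 (l : ℤ) (u : ℤ → ℂ) : Prop :=
  memH l u ∧ ∃ N : ℤ, ∀ n : ℤ, N ≤ n → u n = 0

/-- real-valued sequences in `H^ℓ` -/
def memHR (l : ℤ) (g : ℤ → ℝ) : Prop := ∀ n : ℤ, n < l → g n = 0

/-- `Σ_{n=a}^∞ f(n)` (as an unordered real `tsum`) -/
def qsum (a : ℤ) (f : ℤ → ℝ) : ℝ := ∑' n : ℤ, if a ≤ n then f n else 0

/-- `Σ_{n=a}^∞ f(n)` as a sum in `ℝ≥0∞` (for nonnegative `f`) -/
def esum (a : ℤ) (f : ℤ → ℝ) : ℝ≥0∞ :=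
  ∑' n : ℤ, if a ≤ n then ENNReal.ofReal (f n) else 0

/-- `⌈ℓ/2⌉` -/
def ceilHalf (l : ℕ) : ℤ := (((l + 1) / 2 : ℕ) : ℤ)

/-- `Σ_{n=⌈ℓ/2⌉}^∞ |((-Δ)^{ℓ/2}u)_n|²` -/
def energy (l : ℕ) (u : ℤ → ℂ) : ℝ :=
  qsum (ceilHalf l) fun n => ‖halfPow l u n‖ ^ 2

def eenergy (l : ℕ) (u : ℤ → ℂ) : ℝ≥0∞ :=
  esum (ceilHalf l) fun n => ‖halfPow l u n‖ ^ 2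

/-- `Σ_{n=l}^∞ ρ_n |u_n|²` -/
def wsum (l : ℤ) (ρ : ℤ → ℝ) (u : ℤ → ℂ) : ℝ := qsum l fun n => ρ n * ‖u n‖ ^ 2

def ewsum (l : ℤ) (ρ : ℤ → ℝ) (u : ℤ → ℂ) : ℝ≥0∞ := esum l fun n => ρ n * ‖u n‖ ^ 2

/-- Assumption (A1) -/
def A1 (l : ℕ) (g : ℤ → ℝ) : Prop :=
  memHR l g ∧ ∀ k : ℕ, k < l → ∀ n : ℤ, (l : ℤ) - (k : ℤ) ≤ n → 0 < fdiffR^[k] g n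

/-- Assumption (A2) -/
def A2 (l : ℕ) (g : ℤ → ℝ) : Prop :=
  ∀ k : ℕ, 1 ≤ k → k < l → ∀ n : ℤ, (l : ℤ) + 1 - (k : ℤ) ≤ n →
    0 ≤ negLapR^[l - k] (fdiffR^[k] g) n

/-- Assumption (A2') -/
def A2' (l : ℕ) (g : ℤ → ℝ) : Prop := ∀ n : ℤ, (l : ℤ) ≤ n → 0 ≤ negLapR^[l] g n

/-- Asymptotic expansion (Exp_s):
`g_n = Σ_{j=0}^{2ℓ} α_j n^{ℓ-j-s} + O(n^{-ℓ-1-s})` as `n → ∞`, with `α_0 ≠ 0`. -/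
def ExpS (l : ℕ) (g : ℤ → ℝ) (s : ℝ) : Prop :=
  ∃ α : ℕ → ℝ, α 0 ≠ 0 ∧ ∃ C : ℝ, ∃ N : ℤ, ∀ n : ℤ, N ≤ n →
    |g n - ∑ j ∈ Finset.range (2 * l + 1), α j * (n : ℝ) ^ ((l : ℝ) - (j : ℝ) - s)| ≤
      C * (n : ℝ) ^ (-(l : ℝ) - 1 - s)

/-- the weight `ρ(g)_n = ((-Δ)^ℓ g)_n / g_n` -/
def rho (l : ℕ) (g : ℤ → ℝ) : ℤ → ℝ := fun n => negLapR^[l] g n / g n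

/-- the `n`-th term of the remainder `𝓡_k^{(ℓ)}(g;u)` -/
def remTerm (l k : ℕ) (g : ℤ → ℝ) (u : ℤ → ℂ) : ℤ → ℝ := fun n =>
  (if k + 1 = l then 1
    else negLapR^[l - 1 - k] (fdiffR^[k + 1] g) n / fdiffR^[k + 1] g n) *
  ‖(Real.sqrt (fdiffR^[k] g n / fdiffR^[k] g (n + 1)) : ℂ) * fdiff^[k] u (n + 1) -
    (Real.sqrt (fdiffR^[k] g (n + 1) / fdiffR^[k] g n) : ℂ) * fdiff^[k] u n‖ ^ 2

/-- the remainder `𝓡_k^{(ℓ)}(g;u)` -/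
def rem (l k : ℕ) (g : ℤ → ℝ) (u : ℤ → ℂ) : ℝ :=
  qsum ((l : ℤ) - (k : ℤ)) (remTerm l k g u)

def erem (l k : ℕ) (g : ℤ → ℝ) (u : ℤ → ℂ) : ℝ≥0∞ :=
  esum ((l : ℤ) - (k : ℤ)) (remTerm l k g u)

/-- `ρ` is a discrete Hardy–Rellich–Birman weight for the power `ℓ` -/
def IsHRBWeight (l : ℕ) (ρ : ℤ → ℝ) : Prop :=
  (∀ n : ℤ, (l : ℤ) ≤ n → 0 ≤ ρ n) ∧
  ∀ u : ℤ → ℂ, memH0 l u → wsum l ρ u ≤ energy l u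

/-- criticality of the weight `ρ` -/
def IsCritical (l : ℕ) (ρ : ℤ → ℝ) : Prop :=
  ∀ ρ' : ℤ → ℝ, (∀ n : ℤ, (l : ℤ) ≤ n → 0 ≤ ρ' n) →
    (∀ u : ℤ → ℂ, memH0 l u → wsum l ρ' u ≤ energy l u) →
    (∀ n : ℤ, (l : ℤ) ≤ n → ρ n ≤ ρ' n) →
    ∀ n : ℤ, (l : ℤ) ≤ n → ρ' n = ρ n

/-- optimality near infinity of the weight `ρ` -/
def IsOptNearInfinity (l : ℕ) (ρ : ℤ → ℝ) : Prop :=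
  ∀ M : ℤ, (l : ℤ) ≤ M → ∀ ε : ℝ, 0 < ε →
    ∃ u : ℤ → ℂ, memH0 M u ∧ energy l u < (1 + ε) * wsum l ρ u

/-- non-attainability of the weight `ρ` -/
def IsNonAttainable (l : ℕ) (ρ : ℤ → ℝ) : Prop :=
  ∀ u : ℤ → ℂ, memH l u → ewsum l ρ u ≠ ⊤ → eenergy l u = ewsum l ρ u →
    u = 0

/-- `g^{(ℓ)}_n = √n ∏_{j=1}^{ℓ-1} (n-j)` for `n ≥ 0`, zero for `n < 0` -/
def gseq (l : ℕ) : ℤ → ℝ := fun n =>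
  if n < 0 then 0 else Real.sqrt (n : ℝ) * ∏ j ∈ Finset.Icc 1 (l - 1), ((n : ℝ) - (j : ℝ))

/-- the optimal weight `ρ^{(ℓ)}` -/
def rhoSeq (l : ℕ) : ℤ → ℝ := rho l (gseq l)

/-- `g^{(ℓ)}(q)_n = n^q ∏_{j=1}^{ℓ-1}(n-j)` for `n ≥ 0`, zero for `n < 0` -/
def gq (l : ℕ) (q : ℝ) : ℤ → ℝ := fun n =>
  if n < 0 then 0 else (n : ℝ) ^ q * ∏ j ∈ Finset.Icc 1 (l - 1), ((n : ℝ) - (j : ℝ))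

/-- `h_n = n^{ℓ-1/2}` for `n ≥ 0`, zero for `n < 0` -/
def hseq (l : ℕ) : ℤ → ℝ := fun n =>
  if n < 0 then 0 else (n : ℝ) ^ ((l : ℝ) - 1 / 2)

/-- generalized binomial coefficient `C(ν,m) = ν(ν-1)⋯(ν-m+1)/m!` -/
def genBinom (ν : ℝ) (m : ℕ) : ℝ := (∏ i ∈ Finset.range m, (ν - (i : ℝ))) / (m.factorial : ℝ)

/-- (signed) Stirling numbers of the first kind `s(n,k)`, extended by `0` for `k ≤ 0` -/
def stirling1 (n : ℕ) (k : ℤ) : ℝ :=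
  if k ≤ 0 then 0
  else (-1 : ℝ) ^ (n + k.toNat) *
    ∑ t ∈ (Finset.Icc 1 (n - 1)).powersetCard (n - k.toNat), ∏ i ∈ t, (i : ℝ)

/-- `X_m^{(ℓ)} = Σ_{j=-ℓ}^{ℓ} C(2ℓ,ℓ+j)(-1)^j j^m`, with `X_0^{(ℓ)} = 0` -/
def Xcoef (l m : ℕ) : ℝ :=
  if m = 0 then 0
  else ∑ j ∈ Finset.Icc (-(l : ℤ)) (l : ℤ),
    (((2 * l).choose ((l : ℤ) + j).toNat : ℕ) : ℝ) * (-1 : ℝ) ^ j * ((j : ℝ)) ^ m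

/-- the coefficients `r_k^{(ℓ)}` -/
def rcoef (l k : ℕ) : ℝ :=
  ∑ m ∈ Finset.Icc (2 * l) k,
    genBinom ((l : ℝ) + (m : ℝ) - (k : ℝ) - 1 / 2) m * stirling1 l ((l : ℤ) + (m : ℤ) - (k : ℤ)) *
      Xcoef l m

/-- Pochhammer symbol `(x)_ℓ = x(x+1)⋯(x+ℓ-1)` -/
def poch (x : ℝ) (l : ℕ) : ℝ := ∏ i ∈ Finset.range l, (x + (i : ℝ))




/-- real forward difference -/
def rdiff (F : ℝ → ℝ) : ℝ → ℝ := fun x => F (x + 1) - F x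

lemma fd_mvt : ∀ (m : ℕ) (f : ℕ → ℝ → ℝ),
    (∀ k, k < m → ∀ x : ℝ, 0 < x → HasDerivAt (f k) (f (k + 1) x) x) →
    ∀ x : ℝ, 0 < x → ∃ ξ, x ≤ ξ ∧ ξ ≤ x + m ∧ rdiff^[m] (f 0) x = f m ξ := by
  intro m
  induction m with
  | zero => intro f _ x hx; exact ⟨x, le_refl x, by simp, by simp⟩
  | succ m ih =>
    intro f hf x hx
    obtain ⟨ξ, h1, h2, h3⟩ := ih (fun k => rdiff (f k)) (by
      intro k hk y hy
      have d1 : HasDerivAt (fun z => f k (z + 1)) (f (k + 1) (y + 1)) y := by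
        have h := (hf k (by omega) (y + 1) (by linarith)).comp y
          ((hasDerivAt_id y).add_const 1)
        rw [mul_one] at h; exact h
      exact d1.sub (hf k (by omega) y hy)) x hx
    have hξ : 0 < ξ := lt_of_lt_of_le hx h1
    obtain ⟨c, hc, hceq⟩ := exists_hasDerivAt_eq_slope (f m) (f (m + 1))
      (by linarith : ξ < ξ + 1)
      (fun y hy => (hf m (by omega) y (by rcases hy with ⟨a, b⟩; linarith)).continuousAt.continuousWithinAt)
      (fun y hy => hf m (by omega) y (by rcases hy with ⟨a, b⟩; linarith))
    refine ⟨c, ?_, ?_, ?_⟩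
    · rcases hc with ⟨a, b⟩; linarith
    · rcases hc with ⟨a, b⟩; push_cast; linarith
    · rw [Function.iterate_succ_apply, h3, hceq]
      simp [rdiff]

/-- transfer integer iterated differences to real ones -/
lemma transfer : ∀ (k : ℕ) (u : ℤ → ℝ) (F : ℝ → ℝ),
    (∀ m : ℤ, 0 ≤ m → u m = F m) → ∀ n : ℤ, 0 ≤ n → fdiffR^[k] u n = rdiff^[k] F (n : ℝ) := by
  intro k
  induction k with
  | zero => intro u F h n hn; simpa using h n hn
  | succ k ih =>
    intro u F h n hn
    rw [Function.iterate_succ_apply, Function.iterate_succ_apply]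
    refine ih (fdiffR u) (rdiff F) (fun m hm => ?_) n hn
    have h1 := h m hm
    have h2 := h (m + 1) (by omega)
    simp only [fdiffR, rdiff, h1]
    rw [h2]; push_cast; ring

lemma vanish : ∀ (k : ℕ) (u : ℤ → ℝ) (L : ℤ), (∀ m, m < L → u m = 0) →
    ∀ n : ℤ, n + k < L → fdiffR^[k] u n = 0 := by
  intro k
  induction k with
  | zero => intro u L h n hn; exact h n (by omega)
  | succ k ih =>
    intro u L h n hn
    rw [Function.iterate_succ_apply]
    refine ih (fdiffR u) (L - 1) (fun m hm => ?_) n (by omega)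
    simp only [fdiffR, h m (by omega), h (m + 1) (by omega), sub_zero]

lemma firstval : ∀ (k : ℕ) (u : ℤ → ℝ) (L : ℤ), (∀ m, m < L → u m = 0) →
    fdiffR^[k] u (L - k) = u L := by
  intro k
  induction k with
  | zero => intro u L h; simp
  | succ k ih =>
    intro u L h
    rw [Function.iterate_succ_apply, show L - (k + 1 : ℕ) = (L - 1) - k by push_cast; ring]
    rw [ih (fdiffR u) (L - 1) (fun m hm => by
      simp only [fdiffR, h m (by omega), h (m + 1) (by omega), sub_zero])]
    simp only [fdiffR, h (L - 1) (by omega), sub_add_cancel, sub_zero]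

def expo (l : ℕ) (t : Finset ℕ) : ℝ := (l : ℝ) - 1 - (t.card : ℝ) + 1 / 2

def coefP (t : Finset ℕ) : ℝ := ∏ j ∈ t, (-(j : ℝ))

def dfac (a : ℝ) (k : ℕ) : ℝ := ∏ r ∈ Finset.range k, (a - (r : ℝ))

def fam (l k : ℕ) : ℝ → ℝ := fun x =>
  ∑ t ∈ (Finset.Icc 1 (l - 1)).powerset, coefP t * dfac (expo l t) k * x ^ (expo l t - (k : ℝ))

lemma fam_deriv (l k : ℕ) (x : ℝ) (hx : 0 < x) : HasDerivAt (fam l k) (fam l (k + 1) x) x := by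
  unfold fam
  refine HasDerivAt.fun_sum fun t _ => ?_
  have h := (Real.hasDerivAt_rpow_const (p := expo l t - (k : ℝ))
    (Or.inl hx.ne')).const_mul (coefP t * dfac (expo l t) k)
  convert h using 1
  · rfl
  rw [dfac, Finset.prod_range_succ, ← dfac]
  rw [show expo l t - ((k : ℕ) + 1 : ℕ) = expo l t - (k : ℝ) - 1 by push_cast; ring]
  ring

lemma sqrt_mul_pow (x : ℝ) (hx : 0 ≤ x) (m : ℕ) :
    Real.sqrt x * x ^ m = x ^ ((m : ℝ) + 1 / 2) := by
  rcases eq_or_lt_of_le hx with h | h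
  · rw [← h, Real.sqrt_zero, zero_mul, Real.zero_rpow (by positivity)]
  · rw [Real.sqrt_eq_rpow x, ← Real.rpow_natCast x m, ← Real.rpow_add h]
    ring_nf

lemma fam_val (l : ℕ) (hl : 1 ≤ l) (n : ℤ) (hn : 0 ≤ n) : fam l 0 ((n : ℤ) : ℝ) = gseq l n := by
  have hx : (0 : ℝ) ≤ (n : ℝ) := by exact_mod_cast hn
  rw [gseq]
  simp only [if_neg (by omega : ¬ n < 0)]
  rw [show (∏ j ∈ Finset.Icc 1 (l - 1), ((n : ℝ) - (j : ℝ)))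
      = ∏ j ∈ Finset.Icc 1 (l - 1), ((-(j : ℝ)) + (n : ℝ)) from
    Finset.prod_congr rfl fun j _ => by ring]
  rw [Finset.prod_add, Finset.mul_sum]
  unfold fam
  refine Finset.sum_congr rfl fun t ht => ?_
  have hts := Finset.mem_powerset.mp ht
  have htc : t.card ≤ l - 1 := by
    have := Finset.card_le_card hts
    simpa [Nat.card_Icc] using this
  have hcard : ((Finset.Icc 1 (l - 1)) \ t).card = l - 1 - t.card := by
    rw [Finset.card_sdiff_of_subset hts, Nat.card_Icc]; omega
  rw [Finset.prod_const, hcard]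
  have hexp : expo l t - ((0 : ℕ) : ℝ) = ((l - 1 - t.card : ℕ) : ℝ) + 1 / 2 := by
    rw [Nat.cast_sub htc, Nat.cast_sub hl]
    unfold expo; push_cast; ring
  rw [hexp, ← sqrt_mul_pow _ hx]
  rw [dfac]
  simp only [Finset.range_zero, Finset.prod_empty]
  unfold coefP
  ring

lemma fam_pos (l : ℕ) (hl : 1 ≤ l) (x : ℝ) (hx : 0 < x) : 0 < fam l l x := by
  unfold fam
  refine Finset.sum_pos (fun t ht => ?_) ⟨∅, Finset.empty_mem_powerset _⟩
  have hts := Finset.mem_powerset.mp ht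
  have htc : t.card ≤ l - 1 := by
    have := Finset.card_le_card hts
    simpa [Nat.card_Icc] using this
  set i := t.card with hi
  have h1 : coefP t = (-1 : ℝ) ^ i * ∏ j ∈ t, (j : ℝ) := by
    unfold coefP
    rw [show (∏ j ∈ t, (-(j : ℝ))) = ∏ j ∈ t, ((-1) * (j : ℝ)) from
      Finset.prod_congr rfl fun j _ => by ring]
    rw [Finset.prod_mul_distrib, Finset.prod_const]
  have hsplit : dfac (expo l t) l
      = (∏ r ∈ Finset.range (l - i), (expo l t - (r : ℝ)))
        * ∏ r ∈ Finset.Ico (l - i) l, (expo l t - (r : ℝ)) :=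
    (Finset.prod_range_mul_prod_Ico _ (by omega)).symm
  have h2 : (∏ r ∈ Finset.Ico (l - i) l, (expo l t - (r : ℝ)))
      = (-1 : ℝ) ^ i * ∏ r ∈ Finset.Ico (l - i) l, ((r : ℝ) - expo l t) := by
    rw [show (∏ r ∈ Finset.Ico (l - i) l, (expo l t - (r : ℝ)))
        = ∏ r ∈ Finset.Ico (l - i) l, ((-1) * ((r : ℝ) - expo l t)) from
      Finset.prod_congr rfl fun r _ => by ring]
    rw [Finset.prod_mul_distrib, Finset.prod_const, Nat.card_Ico,
      Nat.sub_sub_self (by omega : i ≤ l)]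
  have hA : 0 < ∏ j ∈ t, (j : ℝ) := by
    refine Finset.prod_pos fun j hj => ?_
    have := (Finset.mem_Icc.mp (hts hj)).1
    positivity
  have hB : 0 < ∏ r ∈ Finset.range (l - i), (expo l t - (r : ℝ)) := by
    refine Finset.prod_pos fun r hr => ?_
    have hr' : r + i + 1 ≤ l := by
      have := Finset.mem_range.mp hr; omega
    have : (r : ℝ) + (i : ℝ) + 1 ≤ (l : ℝ) := by exact_mod_cast hr'
    unfold expo; linarith
  have hC : 0 < ∏ r ∈ Finset.Ico (l - i) l, ((r : ℝ) - expo l t) := by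
    refine Finset.prod_pos fun r hr => ?_
    have hr' : l ≤ r + i := by
      have := (Finset.mem_Ico.mp hr).1; omega
    have : (l : ℝ) ≤ (r : ℝ) + (i : ℝ) := by exact_mod_cast hr'
    unfold expo; linarith
  have hxp : 0 < x ^ (expo l t - (l : ℝ)) := Real.rpow_pos_of_pos hx _
  rw [h1, hsplit, h2]
  have hrw : (-1 : ℝ) ^ i * (∏ j ∈ t, (j : ℝ))
        * ((∏ r ∈ Finset.range (l - i), (expo l t - (r : ℝ)))
          * ((-1 : ℝ) ^ i * ∏ r ∈ Finset.Ico (l - i) l, ((r : ℝ) - expo l t)))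
        * x ^ (expo l t - (l : ℝ))
      = ((-1 : ℝ) * (-1)) ^ i * ((∏ j ∈ t, (j : ℝ))
        * (∏ r ∈ Finset.range (l - i), (expo l t - (r : ℝ)))
        * (∏ r ∈ Finset.Ico (l - i) l, ((r : ℝ) - expo l t))
        * x ^ (expo l t - (l : ℝ))) := by
    rw [mul_pow]; ring
  rw [hrw]
  norm_num
  positivity

lemma gseq_zero (l : ℕ) (hl : 1 ≤ l) : ∀ n : ℤ, n < (l : ℤ) → gseq l n = 0 := by
  intro n hn
  unfold gseq
  by_cases h : n < 0
  · simp [h]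
  · rw [if_neg h]
    rcases eq_or_lt_of_le (by omega : (0 : ℤ) ≤ n) with h0 | h0
    · rw [← h0]; simp
    · refine mul_eq_zero_of_right _ (Finset.prod_eq_zero (i := n.toNat) ?_ ?_)
      · exact Finset.mem_Icc.mpr ⟨by omega, by omega⟩
      · have : ((n.toNat : ℕ) : ℝ) = (n : ℝ) := by
          exact_mod_cast congrArg (Int.cast : ℤ → ℝ) (Int.toNat_of_nonneg (by omega))
        rw [this]; ring

lemma gseq_l_pos (l : ℕ) (hl : 1 ≤ l) : 0 < gseq l (l : ℤ) := by
  unfold gseq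
  rw [if_neg (by omega)]
  refine mul_pos (Real.sqrt_pos.mpr (by push_cast; exact_mod_cast Nat.pos_of_ne_zero (by omega))) ?_
  refine Finset.prod_pos fun j hj => ?_
  have hj' := (Finset.mem_Icc.mp hj).2
  have : (j : ℝ) ≤ (l : ℝ) - 1 := by
    have : j + 1 ≤ l := by omega
    have := (Nat.cast_le (α := ℝ)).mpr this
    push_cast at this; linarith
  push_cast; linarith

lemma part1 (l : ℕ) (hl : 1 ≤ l) : ∀ n : ℤ, 0 ≤ n → 0 < fdiffR^[l] (gseq l) n := by
  intro n hn
  rcases eq_or_lt_of_le hn with h0 | h0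
  · have hv := firstval l (gseq l) (l : ℤ) (gseq_zero l hl)
    rw [show ((l : ℤ) - (l : ℕ) : ℤ) = 0 by omega] at hv
    rw [← h0, hv]
    exact gseq_l_pos l hl
  · have hx : (0 : ℝ) < (n : ℝ) := by exact_mod_cast h0
    rw [transfer l (gseq l) (fam l 0) (fun m hm => (fam_val l hl m hm).symm) n hn]
    obtain ⟨ξ, hξ1, hξ2, heq⟩ := fd_mvt l (fam l) (fun k _ x hx => fam_deriv l k x hx) (n : ℝ) hx
    rw [heq]
    exact fam_pos l hl ξ (lt_of_lt_of_le hx hξ1)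

lemma part2 (l : ℕ) (hl : 1 ≤ l) :
    ∀ d k : ℕ, k + d = l → ∀ n : ℤ, (l : ℤ) - (k : ℤ) ≤ n → 0 < fdiffR^[k] (gseq l) n := by
  intro d
  induction d with
  | zero =>
    intro k hk n hn
    have hkl : k = l := by omega
    rw [hkl]
    exact part1 l hl n (by omega)
  | succ d ih =>
    intro k hk n hn
    refine Int.le_induction (motive := fun n _ => 0 < fdiffR^[k] (gseq l) n) ?_ (fun n hn' ihn => ?_) n hn
    ·
      have hstep : fdiffR^[k + 1] (gseq l) ((l : ℤ) - (k : ℤ) - 1)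
          = fdiffR^[k] (gseq l) ((l : ℤ) - (k : ℤ)) - fdiffR^[k] (gseq l) ((l : ℤ) - (k : ℤ) - 1) := by
        rw [Function.iterate_succ_apply']
        simp only [fdiffR]
        rw [show (l : ℤ) - (k : ℤ) - 1 + 1 = (l : ℤ) - (k : ℤ) by ring]
      have hz : fdiffR^[k] (gseq l) ((l : ℤ) - (k : ℤ) - 1) = 0 :=
        vanish k (gseq l) (l : ℤ) (gseq_zero l hl) _ (by omega)
      have hpos := ih (k + 1) (by omega) ((l : ℤ) - (k : ℤ) - 1) (by push_cast; omega)
      rw [hstep, hz, sub_zero] at hpos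
      exact hpos
    ·
      have hstep : fdiffR^[k + 1] (gseq l) n
          = fdiffR^[k] (gseq l) (n + 1) - fdiffR^[k] (gseq l) n := by
        rw [Function.iterate_succ_apply']; rfl
      have hpos := ih (k + 1) (by omega) n (by push_cast; omega)
      rw [hstep] at hpos
      linarith [ihn]

theorem statement17' (l : ℕ) (hl : 1 ≤ l) :
    (∀ n : ℤ, 0 ≤ n → 0 < fdiffR^[l] (gseq l) n) ∧
    (∀ k : ℕ, k < l → ∀ n : ℤ, (l : ℤ) - (k : ℤ) ≤ n → 0 < fdiffR^[k] (gseq l) n) ∧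
    (memHR l (gseq l) ∧ ∀ k : ℕ, k < l → ∀ n : ℤ, (l : ℤ) - (k : ℤ) ≤ n → 0 < fdiffR^[k] (gseq l) n) := by
  have h2 : ∀ k : ℕ, k < l → ∀ n : ℤ, (l : ℤ) - (k : ℤ) ≤ n → 0 < fdiffR^[k] (gseq l) n :=
    fun k hk n hn => part2 l hl (l - k) k (by omega) n hn
  exact ⟨part1 l hl, h2, gseq_zero l hl, h2⟩

/-- claim (a) of the proof of Theorem 4: positivity of the forward
differences of `g^{(ℓ)}`; in particular `g^{(ℓ)}` satisfies (A1). -/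
theorem statement17 (l : ℕ) (hl : 1 ≤ l) :
    (∀ n : ℤ, 0 ≤ n → 0 < fdiffR^[l] (gseq l) n) ∧
    (∀ k : ℕ, k < l → ∀ n : ℤ, (l : ℤ) - (k : ℤ) ≤ n → 0 < fdiffR^[k] (gseq l) n) ∧
    A1 l (gseq l) := by
  have h2 : ∀ k : ℕ, k < l → ∀ n : ℤ, (l : ℤ) - (k : ℤ) ≤ n → 0 < fdiffR^[k] (gseq l) n :=
    fun k hk n hn => part2 l hl (l - k) k (by omega) n hn
  exact ⟨part1 l hl, h2, gseq_zero l hl, h2⟩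

end HRB
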